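/- For any two interval neutrosophic sets A and B, ∇(A ∩ B) ⊆ ∇A ∩ ∇B, where ∇ is the false-favorite operator. -/

import Mathlib

noncomputable section

open unitInterval

/-- An interval neutrosophic set on `X`: six component functions into `[0,1]`. -/
structure INS (X : Type*) where
  infT : X → I
  supT : X → I
  infI : X → I
  supI : X → I
  infF : X → I
  supF : X → I

namespace INS

variable {X : Type*}

/-- Containment of interval neutrosophic sets. -/
def Subset (A B : INS X) : Prop :=
  ∀ x, A.infT x ≤ B.infT x ∧ A.supT x ≤ B.supT x ∧
    B.infI x ≤ A.infI x ∧ B.supI x ≤ A.supI x ∧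
    B.infF x ≤ A.infF x ∧ B.supF x ≤ A.supF x

/-- Union of interval neutrosophic sets. -/
def union (A B : INS X) : INS X where
  infT x := max (A.infT x) (B.infT x)
  supT x := max (A.supT x) (B.supT x)
  infI x := min (A.infI x) (B.infI x)
  supI x := min (A.supI x) (B.supI x)
  infF x := min (A.infF x) (B.infF x)
  supF x := min (A.supF x) (B.supF x)

/-- Intersection of interval neutrosophic sets. -/
def inter (A B : INS X) : INS X where
  infT x := min (A.infT x) (B.infT x)
  supT x := min (A.supT x) (B.supT x)
  infI x := max (A.infI x) (B.infI x)
  supI x := max (A.supI x) (B.supI x)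
  infF x := max (A.infF x) (B.infF x)
  supF x := max (A.supF x) (B.supF x)

/-- Complement of an interval neutrosophic set. -/
def compl (A : INS X) : INS X where
  infT := A.infF
  supT := A.supF
  infI x := σ (A.supI x)
  supI x := σ (A.infI x)
  infF := A.infT
  supF := A.supT

/-- Truncated addition on `[0,1]`: `min (a + b) 1`. -/
def tadd (a b : I) : I :=
  ⟨min ((a : ℝ) + b) 1, le_min (add_nonneg a.2.1 b.2.1) zero_le_one, min_le_right _ _⟩

/-- Addition of interval neutrosophic sets. -/
def add (A B : INS X) : INS X where
  infT x := tadd (A.infT x) (B.infT x)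
  supT x := tadd (A.supT x) (B.supT x)
  infI x := tadd (A.infI x) (B.infI x)
  supI x := tadd (A.supI x) (B.supI x)
  infF x := tadd (A.infF x) (B.infF x)
  supF x := tadd (A.supF x) (B.supF x)

/-- Truth-favorite operator. -/
def tfav (A : INS X) : INS X where
  infT x := tadd (A.infT x) (A.infI x)
  supT x := tadd (A.supT x) (A.supI x)
  infI _ := 0
  supI _ := 0
  infF := A.infF
  supF := A.supF

/-- False-favorite operator. -/
def ffav (A : INS X) : INS X where
  infT := A.infT
  supT := A.supT
  infI _ := 0
  supI _ := 0
  infF x := tadd (A.infF x) (A.infI x)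
  supF x := tadd (A.supF x) (A.supI x)

end INS
open INS

lemma tadd_mono {a b c d : I} (h1 : a ≤ c) (h2 : b ≤ d) : tadd a b ≤ tadd c d := by
  simp only [tadd, Subtype.mk_le_mk]
  exact min_le_min (add_le_add (Subtype.coe_le_coe.mpr h1) (Subtype.coe_le_coe.mpr h2)) le_rfl

theorem ffav_inter_subset {X : Type*} (A B : INS X) :
    Subset (ffav (inter A B)) (inter (ffav A) (ffav B)) := by
  intro x
  refine ⟨le_rfl, le_rfl, by simp [inter, ffav], by simp [inter, ffav], ?_, ?_⟩ <;>
  · apply max_le <;> exact tadd_mono (by simp [inter]) (by simp [inter])
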